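/- Let (K,∂) be a differential field of characteristic 0 whose field of constants C is algebraically closed, and assume K itself is algebraically closed. Let (𝒦,∂) be a differential field extension of K with the same field of constants C. Let x_1,…,x_n ∈ 𝒦 be such that b_i := ∂x_i ∈ K for every i. If for every (μ_1,…,μ_n) ∈ C^n \ {0} the element μ_1b_1 + ⋯ + μ_nb_n does not lie in ∂(K), then x_1,…,x_n are algebraically independent over K; equivalently, the transcendence degree of K(x_1,…,x_n) over K equals n. (Ostrowski's theorem on 𝔾_a^n, §2 item 2.) -/

import Mathlib

open MvPolynomial

section Aux

variable {𝒦 : Type*} [Field 𝒦]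

/-- Apply `D` to every coefficient of a multivariate polynomial. -/
noncomputable def pdmap (D : 𝒦 → 𝒦) {n : ℕ} (P : MvPolynomial (Fin n) 𝒦) :
    MvPolynomial (Fin n) 𝒦 :=
  ∑ m ∈ P.support, monomial m (D (P.coeff m))

variable (D : 𝒦 → 𝒦)

lemma coeff_pdmap (hD0 : D 0 = 0) {n : ℕ} (P : MvPolynomial (Fin n) 𝒦) (m : Fin n →₀ ℕ) :
    (pdmap D P).coeff m = D (P.coeff m) := by
  classical
  rw [pdmap, coeff_sum]
  simp_rw [coeff_monomial]
  rw [Finset.sum_ite_eq' P.support m (fun m' => D (P.coeff m'))]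
  split
  · rfl
  · rw [notMem_support_iff.mp ‹_›, hD0]

lemma coeff_pderiv' {σ R : Type*} [CommSemiring R] (i : σ) (f : MvPolynomial σ R)
    (m : σ →₀ ℕ) :
    (pderiv i f).coeff m = (m i + 1) • f.coeff (m + Finsupp.single i 1) := by
  classical
  induction f using MvPolynomial.induction_on' with
  | add p q hp hq => simp [map_add, coeff_add, hp, hq]
  | monomial s a =>
    rw [pderiv_monomial, coeff_monomial, coeff_monomial]
    by_cases h : s = m + Finsupp.single i 1
    · subst h
      have hc : m + Finsupp.single i 1 - Finsupp.single i 1 = m := by simp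
      have hsi := Finsupp.add_apply m (Finsupp.single i 1) i
      rw [Finsupp.single_eq_same] at hsi
      rw [if_pos hc, if_pos rfl, hsi, nsmul_eq_mul]
      push_cast
      ring
    · rw [if_neg h, smul_zero]
      by_cases h2 : s - Finsupp.single i 1 = m
      · rw [if_pos h2]
        by_cases h3 : s i = 0
        · simp [h3]
        · exfalso
          apply h
          rw [← h2, tsub_add_cancel_of_le]
          rw [Finsupp.single_le_iff]
          omega
      · rw [if_neg h2]

lemma pdmap_add (hD0 : D 0 = 0) (haddD : ∀ a b : 𝒦, D (a + b) = D a + D b) {n : ℕ} (P Q : MvPolynomial (Fin n) 𝒦) :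
    pdmap D (P + Q) = pdmap D P + pdmap D Q := by
  ext m
  rw [coeff_add, coeff_pdmap D hD0, coeff_pdmap D hD0, coeff_pdmap D hD0, coeff_add, haddD]

lemma pdmap_C (hD0 : D 0 = 0) {n : ℕ} (a : 𝒦) :
    pdmap D (C a : MvPolynomial (Fin n) 𝒦) = C (D a) := by
  classical
  ext m
  rw [coeff_pdmap D hD0, coeff_C, coeff_C, apply_ite D, hD0]

lemma pdmap_mul_X (hD0 : D 0 = 0) {n : ℕ} (P : MvPolynomial (Fin n) 𝒦) (i : Fin n) :
    pdmap D (P * X i) = pdmap D P * X i := by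
  classical
  ext m
  rw [coeff_pdmap D hD0, coeff_mul_X', coeff_mul_X', apply_ite D, hD0, coeff_pdmap D hD0]

lemma eval_chain_rule (haddD : ∀ a b : 𝒦, D (a + b) = D a + D b)
    (hmulD : ∀ a b : 𝒦, D (a * b) = a * D b + D a * b) {n : ℕ} (x : Fin n → 𝒦) (P : MvPolynomial (Fin n) 𝒦) :
    D (eval x P) = eval x (pdmap D P) + ∑ i, D (x i) * eval x (pderiv i P) := by
  classical
  have hD0 : D 0 = 0 := by
    have h := haddD 0 0
    rw [add_zero] at h
    exact (add_eq_left.mp h.symm)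
  induction P using MvPolynomial.induction_on with
  | C a => simp [pdmap_C D hD0, pderiv_C, eval_C]
  | add p q hp hq =>
    rw [map_add, haddD, hp, hq, pdmap_add D hD0 haddD, map_add]
    simp only [map_add, mul_add, Finset.sum_add_distrib]
    ring
  | mul_X p i hp =>
    have h1 : ∀ j, eval x (pderiv j (p * X i)) =
        eval x (pderiv j p) * x i + (if j = i then eval x p else 0) := by
      intro j
      rw [pderiv_mul, map_add, eval_mul, eval_mul, eval_X]
      congr 1
      rcases eq_or_ne j i with rfl | hne
      · simp [pderiv_X_self]
      · rw [pderiv_X_of_ne hne.symm]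
        simp [hne]
    rw [eval_mul, eval_X, hmulD, hp, pdmap_mul_X D hD0, eval_mul, eval_X]
    simp only [h1, mul_add, Finset.sum_add_distrib, mul_ite, mul_zero,
      Finset.sum_ite_eq', Finset.mem_univ, if_true]
    rw [Finset.sum_congr rfl (fun j _ => (mul_assoc (D (x j)) _ (x i)).symm), ← Finset.sum_mul]
    ring

end Aux

/-- **Ostrowski's theorem on 𝔾ₐⁿ** (§2, item 2).
Let `(𝒦, D)` be a differential field of characteristic zero, `K` a subfield stable
under `D`, with `K` algebraically closed, and let `C` be the common field of
constants of `𝒦` (and of `K`), assumed algebraically closed and contained in `K`.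
If `x₁, …, xₙ ∈ 𝒦` satisfy `bᵢ := D xᵢ ∈ K` and for every nonzero vector
`(μ₁, …, μₙ) ∈ Cⁿ` the combination `μ₁b₁ + ⋯ + μₙbₙ` is not a derivative `D v` of
an element `v ∈ K`, then `x₁, …, xₙ` are algebraically independent over `K`
(equivalently, `trdeg K(x₁,…,xₙ)/K = n`). -/
theorem ostrowski_theorem_on_Ga_n
    (𝒦 : Type*) [Field 𝒦] [CharZero 𝒦]
    (D : 𝒦 → 𝒦)
    (hadd : ∀ a b : 𝒦, D (a + b) = D a + D b)
    (hmul : ∀ a b : 𝒦, D (a * b) = a * D b + D a * b)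
    -- the base field K, a differential subfield, algebraically closed
    (K : Subfield 𝒦) (hDK : ∀ x ∈ K, D x ∈ K) (hKac : IsAlgClosed K)
    -- the field of constants C of 𝒦, contained in K, algebraically closed
    (C : Subfield 𝒦) (hC : ∀ x : 𝒦, D x = 0 ↔ x ∈ C)
    (hCK : C ≤ K) (hCac : IsAlgClosed C)
    -- the data
    (n : ℕ) (x : Fin n → 𝒦) (b : Fin n → 𝒦)
    (hb : ∀ i, b i = D (x i))
    (hbK : ∀ i, b i ∈ K)
    -- non-degeneracy: no nonzero C-linear combination of the bᵢ is a derivative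
    -- of an element of K
    (hnd : ∀ μ : Fin n → C, μ ≠ 0 →
      ¬ ∃ v : 𝒦, v ∈ K ∧ (∑ i, (μ i : 𝒦) * b i) = D v) :
    AlgebraicIndependent K x := by
  classical
  -- basic facts about D
  have hD0 : D 0 = 0 := by
    have h := hadd 0 0
    rw [add_zero] at h
    exact (add_eq_left.mp h.symm)
  have hD1 : D 1 = 0 := by
    have h := hmul 1 1
    rw [one_mul, mul_one, one_mul] at h
    exact (add_eq_left.mp h.symm)
  have hDneg : ∀ a : 𝒦, D (-a) = - D a := by
    intro a
    have h := hadd a (-a)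
    rw [add_neg_cancel, hD0] at h
    linear_combination -h
  -- suppose not
  by_contra halg
  rw [algebraicIndependent_iff] at halg
  push_neg at halg
  obtain ⟨p, hpz, hpne⟩ := halg
  -- the degree of a monomial
  let deg : (Fin n →₀ ℕ) → ℕ := fun m => m.sum fun _ e => e
  have hdeg_add1 : ∀ (m : Fin n →₀ ℕ) (i : Fin n),
      deg (m + Finsupp.single i 1) = deg m + 1 := by
    intro m i
    show (m + Finsupp.single i 1).sum (fun _ e => e) = m.sum (fun _ e => e) + 1
    rw [Finsupp.sum_add_index' (fun _ => rfl) (fun _ _ _ => rfl),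
      Finsupp.sum_single_index rfl]
  have hdeg_sum : ∀ m : Fin n →₀ ℕ, deg m = ∑ i ∈ m.support, m i := fun m => rfl
  -- "good" polynomials: nonzero, coefficients in K, vanishing at x
  let Good : MvPolynomial (Fin n) 𝒦 → Prop := fun P =>
    P ≠ 0 ∧ (∀ m, P.coeff m ∈ K) ∧ MvPolynomial.eval x P = 0
  have hGne : ∃ P, Good P := by
    refine ⟨MvPolynomial.map (algebraMap K 𝒦) p, ?_, ?_, ?_⟩
    · intro h
      apply hpne
      apply MvPolynomial.map_injective _ (algebraMap (↥K) 𝒦).injective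
      rw [h, map_zero]
    · intro m
      rw [MvPolynomial.coeff_map]
      exact SetLike.coe_mem _
    · rw [MvPolynomial.eval_map, ← MvPolynomial.aeval_def, hpz]
  -- total degree of good polynomials on their support
  have hGood_deg_le : ∀ P, Good P → ∀ m ∈ P.support, deg m ≤ P.totalDegree := by
    intro P _ m hm
    exact MvPolynomial.le_totalDegree hm
  -- minimal total degree among good polynomials
  let d := sInf {k | ∃ P, Good P ∧ P.totalDegree = k}
  obtain ⟨P0, hP0good, hP0deg⟩ : ∃ P, Good P ∧ P.totalDegree = d :=
    Nat.sInf_mem (s := {k | ∃ P, Good P ∧ P.totalDegree = k})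
      ⟨(hGne.choose).totalDegree, hGne.choose, hGne.choose_spec, rfl⟩
  have hd_le : ∀ P, Good P → d ≤ P.totalDegree := fun P h => Nat.sInf_le ⟨P, h, rfl⟩
  -- `d ≥ 1`
  have hd1 : 1 ≤ d := by
    rcases Nat.eq_zero_or_pos d with h0 | h
    · exfalso
      obtain ⟨hP0ne, hP0K, hP0ev⟩ := hP0good
      have hsupp : P0.support = {0} := by
        have h1 : ∀ m ∈ P0.support, m = 0 := by
          intro m hm
          ext i
          exact (MvPolynomial.totalDegree_eq_zero_iff (Fin n) P0).mp
            (hP0deg.trans h0) m hm i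
        have h2 : P0.support.Nonempty := MvPolynomial.support_nonempty.mpr hP0ne
        obtain ⟨m, hm⟩ := h2
        have := h1 m hm
        subst this
        apply Finset.eq_singleton_iff_unique_mem.mpr ⟨hm, fun y hy => h1 y hy⟩
      have : MvPolynomial.eval x P0 = P0.coeff 0 := by
        rw [MvPolynomial.eval_eq, hsupp]
        simp
      rw [hP0ev] at this
      have h0mem : (0 : Fin n →₀ ℕ) ∈ P0.support := by rw [hsupp]; exact Finset.mem_singleton_self _
      rw [MvPolynomial.mem_support_iff] at h0mem
      exact h0mem this.symm
    · exact h
  -- the number of top-degree monomials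
  let topcard : MvPolynomial (Fin n) 𝒦 → ℕ := fun P =>
    (P.support.filter fun m => deg m = d).card
  -- minimal topcard among good polynomials of total degree d
  let t := sInf {k | ∃ P, Good P ∧ P.totalDegree = d ∧ topcard P = k}
  obtain ⟨P1, hP1good, hP1deg, hP1card⟩ :
      ∃ P, Good P ∧ P.totalDegree = d ∧ topcard P = t :=
    Nat.sInf_mem (s := {k | ∃ P, Good P ∧ P.totalDegree = d ∧ topcard P = k})
      ⟨topcard P0, P0, hP0good, hP0deg, rfl⟩
  have ht_le : ∀ P, Good P → P.totalDegree = d → t ≤ topcard P :=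
    fun P h h' => Nat.sInf_le ⟨P, h, h', rfl⟩
  -- a top monomial m0 of P1
  obtain ⟨m0, hm0mem, hm0deg⟩ : ∃ m0 ∈ P1.support, deg m0 = d := by
    obtain ⟨m0, hm, hsup⟩ := Finset.exists_mem_eq_sup P1.support
      (MvPolynomial.support_nonempty.mpr hP1good.1) (fun m => m.sum fun _ e => e)
    exact ⟨m0, hm, by rw [show deg m0 = P1.totalDegree from hsup.symm, hP1deg]⟩
  have ha0 : P1.coeff m0 ≠ 0 := MvPolynomial.mem_support_iff.mp hm0mem
  have haK : P1.coeff m0 ∈ K := hP1good.2.1 m0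
  -- normalize P1 so that the coefficient of m0 is 1
  let a : 𝒦 := P1.coeff m0
  let P2 : MvPolynomial (Fin n) 𝒦 := MvPolynomial.C a⁻¹ * P1
  have hP2coeff : ∀ m, P2.coeff m = a⁻¹ * P1.coeff m := fun m =>
    MvPolynomial.coeff_C_mul m a⁻¹ P1
  have hP2m0 : P2.coeff m0 = 1 := by
    rw [hP2coeff, inv_mul_cancel₀ ha0]
  have hP2supp : P2.support = P1.support := by
    ext m
    simp only [MvPolynomial.mem_support_iff, hP2coeff]
    constructor
    · intro h hc; rw [hc, mul_zero] at h; exact h rfl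
    · intro h
      exact mul_ne_zero (inv_ne_zero ha0) h
  have hP2good : Good P2 := by
    refine ⟨?_, ?_, ?_⟩
    · intro h
      have h1 := hP2m0
      rw [h, MvPolynomial.coeff_zero] at h1
      exact zero_ne_one h1
    · intro m
      rw [hP2coeff]
      exact K.mul_mem (K.inv_mem haK) (hP1good.2.1 m)
    · rw [MvPolynomial.eval_mul, hP1good.2.2, mul_zero]
  have hP2deg : P2.totalDegree = d := by
    rw [MvPolynomial.totalDegree, hP2supp, ← MvPolynomial.totalDegree, hP1deg]
  have hP2card : topcard P2 = t := by
    show (P2.support.filter fun m => deg m = d).card = t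
    rw [hP2supp]
    exact hP1card
  -- coefficients above degree d vanish
  have hP2high : ∀ m : Fin n →₀ ℕ, d < deg m → P2.coeff m = 0 := by
    intro m hm
    apply MvPolynomial.coeff_eq_zero_of_totalDegree_lt
    rw [hP2deg, ← hdeg_sum]
    exact hm
  -- the key polynomial Q
  let Q : MvPolynomial (Fin n) 𝒦 :=
    pdmap D P2 + ∑ i, MvPolynomial.C (b i) * MvPolynomial.pderiv i P2
  have hQcoeff : ∀ m, Q.coeff m =
      D (P2.coeff m) + ∑ i, b i * ((m i + 1) • P2.coeff (m + Finsupp.single i 1)) := by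
    intro m
    show (pdmap D P2 + _).coeff m = _
    rw [MvPolynomial.coeff_add, coeff_pdmap D hD0, MvPolynomial.coeff_sum]
    congr 1
    refine Finset.sum_congr rfl fun i _ => ?_
    rw [MvPolynomial.coeff_C_mul, coeff_pderiv']
  -- Q vanishes at x
  have hQeval : MvPolynomial.eval x Q = 0 := by
    show MvPolynomial.eval x (pdmap D P2 + _) = 0
    rw [map_add, map_sum]
    have : ∀ i ∈ Finset.univ, MvPolynomial.eval x (MvPolynomial.C (b i) *
        MvPolynomial.pderiv i P2) = D (x i) * MvPolynomial.eval x (MvPolynomial.pderiv i P2) := by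
      intro i _
      rw [MvPolynomial.eval_mul, MvPolynomial.eval_C, hb i]
    rw [Finset.sum_congr rfl this, ← eval_chain_rule D hadd hmul, hP2good.2.2, hD0]
  -- coefficients of Q lie in K
  have hQK : ∀ m, Q.coeff m ∈ K := by
    intro m
    rw [hQcoeff]
    refine K.add_mem (hDK _ (hP2good.2.1 m)) (Subfield.sum_mem K fun i _ => ?_)
    exact K.mul_mem (hbK i) (nsmul_mem (hP2good.2.1 _) _)
  -- coefficients of Q above degree d vanish
  have hQhigh : ∀ m : Fin n →₀ ℕ, d < deg m → Q.coeff m = 0 := by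
    intro m hm
    rw [hQcoeff, hP2high m hm, hD0]
    have : ∀ i ∈ Finset.univ,
        b i * ((m i + 1) • P2.coeff (m + Finsupp.single i 1)) = 0 := by
      intro i _
      rw [hP2high (m + Finsupp.single i 1) (by rw [hdeg_add1]; omega), smul_zero, mul_zero]
    rw [Finset.sum_congr rfl this]
    simp
  -- coefficients of Q at degree d are derivatives of the corresponding P2-coefficients
  have hQtop : ∀ m : Fin n →₀ ℕ, deg m = d → Q.coeff m = D (P2.coeff m) := by
    intro m hm
    rw [hQcoeff]
    have : ∀ i ∈ Finset.univ,
        b i * ((m i + 1) • P2.coeff (m + Finsupp.single i 1)) = 0 := by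
      intro i _
      rw [hP2high (m + Finsupp.single i 1) (by rw [hdeg_add1]; omega), smul_zero, mul_zero]
    rw [Finset.sum_congr rfl this]
    simp
  -- Q must be zero, by minimality
  have hQ0 : Q = 0 := by
    by_contra hQne
    have hQgood : Good Q := ⟨hQne, hQK, hQeval⟩
    have hQdegle : Q.totalDegree ≤ d := by
      apply Finset.sup_le
      intro m hm
      by_contra hlt
      push_neg at hlt
      exact MvPolynomial.mem_support_iff.mp hm (hQhigh m hlt)
    have hQdeg : Q.totalDegree = d := le_antisymm hQdegle (hd_le Q hQgood)
    have htQ : t ≤ topcard Q := ht_le Q hQgood hQdeg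
    -- but the top support of Q is strictly smaller
    have hsub : (Q.support.filter fun m => deg m = d) ⊆
        (P2.support.filter fun m => deg m = d).erase m0 := by
      intro m hm
      rw [Finset.mem_filter, MvPolynomial.mem_support_iff] at hm
      obtain ⟨hmne, hmdeg⟩ := hm
      rw [hQtop m hmdeg] at hmne
      refine Finset.mem_erase.mpr ⟨?_, ?_⟩
      · intro h
        rw [h, hP2m0, hD1] at hmne
        exact hmne rfl
      · rw [Finset.mem_filter, MvPolynomial.mem_support_iff]
        refine ⟨fun h => hmne (by rw [h, hD0]), hmdeg⟩
    have hm0top : m0 ∈ (P2.support.filter fun m => deg m = d) := by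
      rw [Finset.mem_filter]
      exact ⟨by rw [hP2supp]; exact hm0mem, hm0deg⟩
    have hcard := Finset.card_le_card hsub
    rw [Finset.card_erase_of_mem hm0top] at hcard
    have ht1 : 1 ≤ t := by
      rw [← hP2card]
      exact Finset.card_pos.mpr ⟨m0, hm0top⟩
    have : topcard Q ≤ t - 1 := by
      rw [← hP2card]
      exact hcard
    omega
  -- from Q = 0 : the coefficient equations
  have hEq : ∀ m : Fin n →₀ ℕ,
      D (P2.coeff m) + ∑ i, b i * ((m i + 1) • P2.coeff (m + Finsupp.single i 1)) = 0 := by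
    intro m
    rw [← hQcoeff, hQ0, MvPolynomial.coeff_zero]
  -- top-degree coefficients of P2 are constants
  have hTopC : ∀ m : Fin n →₀ ℕ, deg m = d → P2.coeff m ∈ C := by
    intro m hm
    rw [← hC]
    rw [← hQtop m hm, hQ0, MvPolynomial.coeff_zero]
  -- find a coordinate where m0 is positive
  obtain ⟨i0, hi0⟩ : ∃ i0, m0 i0 ≠ 0 := by
    by_contra h
    push_neg at h
    have hm00 : m0 = 0 := Finsupp.ext h
    rw [hm00] at hm0deg
    have : deg (0 : Fin n →₀ ℕ) = 0 := Finsupp.sum_zero_index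
    omega
  let m1 : Fin n →₀ ℕ := m0 - Finsupp.single i0 1
  have hm1 : m1 + Finsupp.single i0 1 = m0 := by
    apply tsub_add_cancel_of_le
    rw [Finsupp.single_le_iff]
    omega
  have hm1deg : deg m1 + 1 = d := by
    rw [← hm0deg, ← hm1, hdeg_add1]
  -- the vector μ
  have hμmem : ∀ i : Fin n, ((m1 i + 1 : ℕ) : 𝒦) * P2.coeff (m1 + Finsupp.single i 1) ∈ C := by
    intro i
    refine C.mul_mem (natCast_mem C _) (hTopC _ ?_)
    rw [hdeg_add1]
    omega
  let μ : Fin n → C := fun i =>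
    ⟨((m1 i + 1 : ℕ) : 𝒦) * P2.coeff (m1 + Finsupp.single i 1), hμmem i⟩
  have hμne : μ ≠ 0 := by
    intro h
    have h1 : (μ i0 : 𝒦) = 0 := by rw [h]; rfl
    rw [show (μ i0 : 𝒦) = ((m1 i0 + 1 : ℕ) : 𝒦) * P2.coeff (m1 + Finsupp.single i0 1) from rfl,
      hm1, hP2m0, mul_one] at h1
    have : (m1 i0 + 1 : ℕ) ≠ 0 := Nat.succ_ne_zero _
    exact (Nat.cast_ne_zero (R := 𝒦)).mpr this h1
  -- contradiction with the non-degeneracy hypothesis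
  apply hnd μ hμne
  refine ⟨- P2.coeff m1, K.neg_mem (hP2good.2.1 m1), ?_⟩
  rw [hDneg]
  have h := hEq m1
  have hrw : ∀ i ∈ Finset.univ, (μ i : 𝒦) * b i =
      b i * ((m1 i + 1) • P2.coeff (m1 + Finsupp.single i 1)) := by
    intro i _
    rw [show (μ i : 𝒦) = ((m1 i + 1 : ℕ) : 𝒦) * P2.coeff (m1 + Finsupp.single i 1) from rfl,
      nsmul_eq_mul]
    push_cast
    ring
  rw [Finset.sum_congr rfl hrw]
  linear_combination h
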